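/- For every ℓ ≥ 1, with S_n := #{i : b_i < a_n} and D_n := S_n - n/φ (a real-valued quantity), one has |D_n| ≤ φℓ for all n ≥ 0. -/
import Mathlib


/-- The minimum excluded value of a set of natural numbers. -/
noncomputable def mex (S : Set ℕ) : ℕ := sInf {m : ℕ | m ∉ S}

/-- `MexSeq ℓ a b` says that `a`, `b` are the sequences defined by
    `a 0 = ℓ+1`, `b 0 = 2ℓ+2`, and for `n ≥ 1`:
    `a n = mex({a i, b i : i < n} ∪ {0,…,ℓ})`, `b n = a n + n + ℓ + 1`. -/
def MexSeq (ℓ : ℕ) (a b : ℕ → ℕ) : Prop :=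
  a 0 = ℓ + 1 ∧ b 0 = 2 * ℓ + 2 ∧
  (∀ n : ℕ, 1 ≤ n →
    a n = mex ({m : ℕ | ∃ i < n, m = a i ∨ m = b i} ∪ {m : ℕ | m ≤ ℓ})) ∧
  (∀ n : ℕ, 1 ≤ n → b n = a n + n + ℓ + 1)

noncomputable def phi : ℝ := (1 + Real.sqrt 5) / 2

lemma mex_not_mem {S : Set ℕ} (h : ∃ m, m ∉ S) : mex S ∉ S :=
  Nat.sInf_mem (h : {m | m ∉ S}.Nonempty)

lemma mem_of_lt_mex {S : Set ℕ} {m : ℕ} (h : m < mex S) : m ∈ S := by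
  by_contra hm
  exact absurd (Nat.sInf_le hm) (not_le_of_gt h)

def TT (ℓ : ℕ) (a b : ℕ → ℕ) (n : ℕ) : Set ℕ :=
  {m : ℕ | ∃ i < n, m = a i ∨ m = b i} ∪ {m : ℕ | m ≤ ℓ}

section seq
variable {ℓ : ℕ} {a b : ℕ → ℕ}

lemma TT_compl_nonempty (n : ℕ) : ∃ m, m ∉ TT ℓ a b n := by
  refine ⟨ℓ + 1 + (Finset.range n).sup (fun i => max (a i) (b i)), ?_⟩
  rintro (⟨i, hi, (h | h)⟩ | h)
  · have : a i ≤ (Finset.range n).sup (fun i => max (a i) (b i)) :=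
      le_trans (le_max_left _ _) (Finset.le_sup (f := fun i => max (a i) (b i)) (Finset.mem_range.2 hi))
    omega
  · have : b i ≤ (Finset.range n).sup (fun i => max (a i) (b i)) :=
      le_trans (le_max_right _ _) (Finset.le_sup (f := fun i => max (a i) (b i)) (Finset.mem_range.2 hi))
    omega
  · simp only [Set.mem_setOf_eq] at h; omega

lemma a_eq_mex (hab : MexSeq ℓ a b) {n : ℕ} (hn : 1 ≤ n) :
    a n = mex (TT ℓ a b n) := hab.2.2.1 n hn

lemma b_eq (hab : MexSeq ℓ a b) (n : ℕ) : b n = a n + n + ℓ + 1 := by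
  cases n with
  | zero => rw [hab.2.1, hab.1]; omega
  | succ m => exact hab.2.2.2 (m+1) (by omega)

lemma a_notMem (hab : MexSeq ℓ a b) {n : ℕ} (hn : 1 ≤ n) :
    a n ∉ TT ℓ a b n := by
  rw [a_eq_mex hab hn]; exact mex_not_mem (TT_compl_nonempty n)

lemma lt_a_mem (hab : MexSeq ℓ a b) {n m : ℕ} (h : m < a n) : m ∈ TT ℓ a b n := by
  cases n with
  | zero => right; simp only [Set.mem_setOf_eq]; rw [hab.1] at h; omega
  | succ p =>
    rw [a_eq_mex hab (by omega : 1 ≤ p + 1)] at h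
    exact mem_of_lt_mex h

lemma a_gt (hab : MexSeq ℓ a b) (n : ℕ) : ℓ < a n := by
  cases n with
  | zero => rw [hab.1]; omega
  | succ p =>
    by_contra h
    exact a_notMem hab (by omega : 1 ≤ p + 1) (Or.inr (show a (p+1) ≤ ℓ by omega))

lemma TT_mono {n m : ℕ} (h : n ≤ m) : TT ℓ a b n ⊆ TT ℓ a b m := by
  rintro x (⟨i, hi, hx⟩ | hx)
  · exact Or.inl ⟨i, by omega, hx⟩
  · exact Or.inr hx

lemma a_strictMono (hab : MexSeq ℓ a b) : StrictMono a := by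
  apply strictMono_nat_of_lt_succ
  intro n
  have h1 : a (n+1) ∉ TT ℓ a b (n+1) := a_notMem hab (by omega)
  by_contra hle
  push_neg at hle
  rcases eq_or_lt_of_le hle with heq | hlt
  · exact h1 (Or.inl ⟨n, by omega, Or.inl heq⟩)
  · exact h1 (TT_mono (by omega) (lt_a_mem hab hlt))

lemma a_ne_b (hab : MexSeq ℓ a b) (i j : ℕ) : a i ≠ b j := by
  rcases lt_or_ge j i with h | h
  · intro he
    exact a_notMem hab (by omega : 1 ≤ i) (Or.inl ⟨j, h, Or.inr he⟩)
  · have h1 : a i ≤ a j := (a_strictMono hab).monotone h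
    have := b_eq hab j
    omega

lemma b_strictMono (hab : MexSeq ℓ a b) : StrictMono b := by
  intro i j hij
  have := b_eq hab i
  have := b_eq hab j
  have := a_strictMono hab hij
  omega

end seq

/-- the count `S n`, defined via infimum -/
noncomputable def KK (a b : ℕ → ℕ) (n : ℕ) : ℕ := sInf {i | a n ≤ b i}

section count
variable {ℓ : ℕ} {a b : ℕ → ℕ}

lemma KK_set_nonempty (hab : MexSeq ℓ a b) (n : ℕ) : {i | a n ≤ b i}.Nonempty := by
  refine ⟨a n, ?_⟩
  have := b_eq hab (a n)
  simp only [Set.mem_setOf_eq]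
  omega

lemma b_lt_iff (hab : MexSeq ℓ a b) (n i : ℕ) : b i < a n ↔ i < KK a b n := by
  constructor
  · intro h
    by_contra hc
    push_neg at hc
    have h1 : a n ≤ b (KK a b n) := Nat.sInf_mem (KK_set_nonempty hab n)
    have h2 : b (KK a b n) ≤ b i := (b_strictMono hab).monotone hc
    omega
  · intro h
    have := Nat.notMem_of_lt_sInf (h : i < sInf {i | a n ≤ b i})
    simp only [Set.mem_setOf_eq, not_le] at this
    exact this

lemma ncard_eq (hab : MexSeq ℓ a b) (n : ℕ) :
    Set.ncard {i : ℕ | b i < a n} = KK a b n := by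
  have : {i : ℕ | b i < a n} = ↑(Finset.range (KK a b n)) := by
    ext i
    simp only [Set.mem_setOf_eq, Finset.coe_range, Set.mem_Iio]
    exact b_lt_iff hab n i
  rw [this, Set.ncard_coe_finset, Finset.card_range]

lemma a_formula (hab : MexSeq ℓ a b) (n : ℕ) :
    a n = n + KK a b n + ℓ + 1 := by
  have key : Finset.range (a n) =
      (Finset.range (ℓ+1) ∪ (Finset.range n).image a) ∪ (Finset.range (KK a b n)).image b := by
    ext m
    simp only [Finset.mem_union, Finset.mem_image, Finset.mem_range]
    constructor
    · intro hm
      rcases lt_a_mem hab hm with ⟨i, hi, (h | h)⟩ | h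
      · exact Or.inl (Or.inr ⟨i, hi, h.symm⟩)
      · refine Or.inr ⟨i, ?_, h.symm⟩
        rw [← b_lt_iff hab n i, ← h]; exact hm
      · exact Or.inl (Or.inl (by simpa using Nat.lt_succ_of_le h))
    · rintro ((h | ⟨i, hi, rfl⟩) | ⟨i, hi, rfl⟩)
      · have := a_gt hab n; omega
      · exact a_strictMono hab hi
      · exact (b_lt_iff hab n i).2 hi
  have d1 : Disjoint (Finset.range (ℓ+1)) ((Finset.range n).image a) := by
    simp only [Finset.disjoint_left, Finset.mem_range, Finset.mem_image]
    rintro m hm ⟨i, hi, rfl⟩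
    have := a_gt hab i; omega
  have d2 : Disjoint (Finset.range (ℓ+1) ∪ (Finset.range n).image a)
      ((Finset.range (KK a b n)).image b) := by
    simp only [Finset.disjoint_left, Finset.mem_union, Finset.mem_range, Finset.mem_image]
    rintro m hm ⟨i, hi, rfl⟩
    rcases hm with h | ⟨j, hj, hji⟩
    · have hg := a_gt hab i
      have := b_eq hab i
      omega
    · exact a_ne_b hab j i hji
  have c1 : ((Finset.range n).image a).card = n := by
    rw [Finset.card_image_of_injective _ (a_strictMono hab).injective, Finset.card_range]
  have c2 : ((Finset.range (KK a b n)).image b).card = KK a b n := by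
    rw [Finset.card_image_of_injective _ (b_strictMono hab).injective, Finset.card_range]
  have := congrArg Finset.card key
  rw [Finset.card_range, Finset.card_union_of_disjoint d2, Finset.card_union_of_disjoint d1,
    Finset.card_range, c1, c2] at this
  omega

lemma KK_ineq1 (hab : MexSeq ℓ a b) (n : ℕ) :
    n ≤ KK a b n + KK a b (KK a b n) + ℓ := by
  have h1 : a n ≤ b (KK a b n) := Nat.sInf_mem (KK_set_nonempty hab n)
  have h2 : a n ≠ b (KK a b n) := a_ne_b hab n _
  have e1 := b_eq hab (KK a b n)
  have e2 := a_formula hab (KK a b n)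
  have e3 := a_formula hab n
  omega

lemma KK_ineq2 (hab : MexSeq ℓ a b) {n : ℕ} (h : 1 ≤ KK a b n) :
    KK a b n + KK a b (KK a b n - 1) + ℓ ≤ n := by
  have h1 : b (KK a b n - 1) < a n := (b_lt_iff hab n _).2 (by omega)
  have e1 := b_eq hab (KK a b n - 1)
  have e2 := a_formula hab (KK a b n - 1)
  have e3 := a_formula hab n
  omega

lemma KK_zero (hab : MexSeq ℓ a b) : KK a b 0 = 0 := by
  have := a_formula hab 0
  rw [hab.1] at this
  omega

lemma KK_lt (hℓ : 1 ≤ ℓ) (hab : MexSeq ℓ a b) {n : ℕ} (hn : 1 ≤ n) : KK a b n < n := by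
  rcases Nat.eq_zero_or_pos (KK a b n) with h | h
  · omega
  · have := KK_ineq2 hab h
    omega

end count


lemma phi_sq : phi ^ 2 = phi + 1 := by
  have h : Real.sqrt 5 ^ 2 = 5 := Real.sq_sqrt (by norm_num)
  unfold phi
  nlinarith [h]

lemma phi_gt_one : 1 < phi := by
  have h : Real.sqrt 5 ^ 2 = 5 := Real.sq_sqrt (by norm_num)
  have h2 : Real.sqrt 5 ≥ 0 := Real.sqrt_nonneg 5
  have : (2:ℝ) ≤ Real.sqrt 5 := by nlinarith
  unfold phi
  linarith


lemma KK_invariant {ℓ : ℕ} (hℓ : 1 ≤ ℓ) {a b : ℕ → ℕ} (hab : MexSeq ℓ a b) :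
    ∀ n : ℕ, (KK a b n : ℝ) * phi ≤ n + 1 ∧
      (n : ℝ) * phi ≤ (KK a b n : ℝ) * phi ^ 2 + ℓ * phi + 1 := by
  have hp2 := phi_sq
  have hp1 := phi_gt_one
  have hppos : (0:ℝ) < phi := by linarith
  intro n
  induction n using Nat.strong_induction_on with
  | _ n ih =>
    rcases Nat.eq_zero_or_pos n with rfl | hn
    · rw [KK_zero hab]
      constructor
      · norm_num
      · push_cast; nlinarith [Nat.cast_nonneg (α := ℝ) ℓ]
    · have hkn : KK a b n < n := KK_lt hℓ hab hn
      constructor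
      · -- upper: KK n * phi ≤ n + 1
        rcases Nat.eq_zero_or_pos (KK a b n) with hz | hk1
        · rw [hz]; push_cast
          nlinarith [Nat.one_le_cast (α := ℝ) |>.2 hn]
        · have h2 := KK_ineq2 hab hk1
          have ihm := (ih (KK a b n - 1) (by omega)).2
          -- cast h2
          have h2' : (KK a b n : ℝ) + (KK a b (KK a b n - 1) : ℝ) + ℓ ≤ n := by
            exact_mod_cast h2
          have hcast : ((KK a b n - 1 : ℕ) : ℝ) = (KK a b n : ℝ) - 1 := by
            push_cast [Nat.cast_sub hk1]; ring
          rw [hcast] at ihm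
          -- ihm : (KK n - 1) * phi ≤ KK (KK n - 1) * phi^2 + ℓ*phi + 1
          nlinarith [ihm, h2', hp2, hppos]
      · -- lower: n * phi ≤ KK n * phi^2 + ℓ*phi + 1
        have h1 := KK_ineq1 hab n
        have ihk := (ih (KK a b n) hkn).1
        have h1' : (n : ℝ) ≤ (KK a b n : ℝ) + (KK a b (KK a b n) : ℝ) + ℓ := by
          exact_mod_cast h1
        nlinarith [mul_le_mul_of_nonneg_right h1' hppos.le, ihk, hp2]

theorem mexSeq_D_bound (ℓ : ℕ) (hℓ : 1 ≤ ℓ) (a b : ℕ → ℕ)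
    (hab : MexSeq ℓ a b) :
    ∀ n : ℕ,
      |(Set.ncard {i : ℕ | b i < a n} : ℝ) - (n : ℝ) / phi| ≤ phi * ℓ := by
  have hp2 := phi_sq
  have hp1 := phi_gt_one
  have hppos : (0:ℝ) < phi := by linarith
  intro n
  rw [ncard_eq hab n, abs_le]
  obtain ⟨hup, hlo⟩ := KK_invariant hℓ hab n
  have hd : (n : ℝ) / phi * phi = n := div_mul_cancel₀ _ (ne_of_gt hppos)
  have hl1 : (1:ℝ) ≤ ℓ := by exact_mod_cast hℓ
  constructor
  · -- -(phi*ℓ) ≤ KK n - n/phi, i.e. n/phi ≤ KK n + phi*ℓ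
    -- from hlo : n*phi ≤ KK n*phi^2 + ℓ*phi + 1
    nlinarith [hd, hlo, mul_pos hppos hppos]
  · -- KK n - n/phi ≤ phi*ℓ, from hup : KK n*phi ≤ n+1
    nlinarith [hd, hup]
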